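/- Let m ≥ 2 and let μ(m) be the largest prime power dividing m. Then for all n, n' ≥ μ(m), the number of congruence preserving functions ℤ/nℤ → ℤ/mℤ equals the number of congruence preserving functions ℤ/n'ℤ → ℤ/mℤ; i.e., CP(n, m) does not depend on n for n ≥ μ(m). -/

import Mathlib

/-- `ulcm k` is the least common multiple of `1, 2, …, k`, with `ulcm 0 = 1`. -/
def ulcm (k : ℕ) : ℕ := (Finset.Icc 1 k).lcm id

/-- `mu m` is the largest prime power dividing `m`. -/
def mu (m : ℕ) : ℕ := m.primeFactors.sup fun p => p ^ m.factorization p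

/-- `f : ZMod n → ZMod m` is congruence preserving. -/
def CongPres (n m : ℕ) (f : ZMod n → ZMod m) : Prop :=
  ∀ d : ℕ, ∀ hd : d ∣ m, ∀ a b : ℕ, a < n → b < n → a ≡ b [MOD d] →
    ZMod.castHom hd (ZMod d) (f a) = ZMod.castHom hd (ZMod d) (f b)

/-- `CP n m` is the number of congruence preserving functions `ZMod n → ZMod m`. -/
noncomputable def CP (n m : ℕ) : ℕ := Nat.card {f : ZMod n → ZMod m // CongPres n m f}

lemma castHom_val' {m d : ℕ} [NeZero m] (hd : d ∣ m) (x : ZMod m) :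
    ZMod.castHom hd (ZMod d) x = (x.val : ZMod d) := by
  conv_lhs => rw [← ZMod.natCast_rightInverse x]
  exact map_natCast _ _

lemma congPres_iff {n m : ℕ} [NeZero m] (f : ZMod n → ZMod m) :
    CongPres n m f ↔ ∀ d : ℕ, d ∣ m → ∀ a b : ℕ, a < n → b < n → a ≡ b [MOD d] →
      (f a).val ≡ (f b).val [MOD d] := by
  unfold CongPres
  constructor
  · intro h d hd a b ha hb hab
    have := h d hd a b ha hb hab
    rwa [castHom_val' hd, castHom_val' hd, ZMod.natCast_eq_natCast_iff] at this
  · intro h d hd a b ha hb hab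
    rw [castHom_val' hd, castHom_val' hd, ZMod.natCast_eq_natCast_iff]
    exact h d hd a b ha hb hab

lemma modEq_of_primePow {M u v : ℕ} (_hM : M ≠ 0)
    (h : ∀ p k : ℕ, p.Prime → k ≠ 0 → p ^ k ∣ M → u ≡ v [MOD p ^ k]) : u ≡ v [MOD M] := by
  clear _hM
  rw [Nat.modEq_iff_dvd, ← Int.natAbs_dvd_natAbs, Int.natAbs_natCast]
  refine (Nat.dvd_iff_prime_pow_dvd_dvd _ M).mpr fun p k hp hpk => ?_
  rcases Nat.eq_zero_or_pos k with rfl | hk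
  · simp
  have := h p k hp hk.ne' hpk
  rw [Nat.modEq_iff_dvd, ← Int.natAbs_dvd_natAbs, Int.natAbs_natCast] at this
  exact this

lemma two_le_mu {m : ℕ} (hm : 2 ≤ m) : 2 ≤ mu m := by
  obtain ⟨p, hp, hpd⟩ := Nat.exists_prime_and_dvd (show m ≠ 1 by omega)
  have hpf : p ∈ m.primeFactors := Nat.mem_primeFactors.mpr ⟨hp, hpd, by omega⟩
  calc 2 ≤ p := hp.two_le
    _ ≤ p ^ m.factorization p := Nat.le_self_pow (by
        simpa using (Nat.Prime.factorization_pos_of_dvd hp (by omega) hpd).ne') p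
    _ ≤ mu m := Finset.le_sup (f := fun p => p ^ m.factorization p) hpf

lemma prime_pow_le_mu {m p k : ℕ} (hm : m ≠ 0) (hp : p.Prime) (hk0 : k ≠ 0) (hk : p ^ k ∣ m) :
    p ^ k ≤ mu m := by
  have hpm : p ∣ m := dvd_trans (dvd_pow_self p hk0) hk
  have hpf : p ∈ m.primeFactors := Nat.mem_primeFactors.mpr ⟨hp, hpm, hm⟩
  calc p ^ k ≤ p ^ m.factorization p :=
        Nat.pow_le_pow_right hp.pos ((Nat.Prime.pow_dvd_iff_le_factorization hp hm).mp hk)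
    _ ≤ mu m := Finset.le_sup (f := fun p => p ^ m.factorization p) hpf

lemma zmod_eq_of_modEq {m : ℕ} [NeZero m] {x y : ZMod m} (h : x.val ≡ y.val [MOD m]) :
    x = y := by
  have hx := ZMod.val_lt x
  have hy := ZMod.val_lt y
  have hval : x.val = y.val := by
    unfold Nat.ModEq at h
    rwa [Nat.mod_eq_of_lt hx, Nat.mod_eq_of_lt hy] at h
  calc x = ((x.val : ℕ) : ZMod m) := (ZMod.natCast_rightInverse x).symm
    _ = ((y.val : ℕ) : ZMod m) := by rw [hval]
    _ = y := ZMod.natCast_rightInverse y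

lemma CP_succ (m n : ℕ) (hm : 2 ≤ m) (hn : mu m ≤ n) : CP (n + 1) m = CP n m := by
  haveI : NeZero m := ⟨by omega⟩
  have hn2 : 2 ≤ n := le_trans (two_le_mu hm) hn
  haveI : NeZero n := ⟨by omega⟩
  have hm0 : m ≠ 0 := by omega
  -- the restriction map
  set res : (ZMod (n + 1) → ZMod m) → (ZMod n → ZMod m) :=
    fun f x => f ((x.val : ℕ) : ZMod (n + 1)) with hres
  have res_apply : ∀ (f : ZMod (n + 1) → ZMod m) (a : ℕ), a < n →
      res f ((a : ℕ) : ZMod n) = f ((a : ℕ) : ZMod (n + 1)) := by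
    intro f a ha
    simp only [hres, ZMod.val_natCast_of_lt ha]
  have res_cp : ∀ f : ZMod (n + 1) → ZMod m, CongPres (n + 1) m f → CongPres n m (res f) := by
    intro f hf
    rw [congPres_iff] at hf ⊢
    intro d hd a b ha hb hab
    rw [res_apply f a ha, res_apply f b hb]
    exact hf d hd a b (by omega) (by omega) hab
  set Res : {f : ZMod (n + 1) → ZMod m // CongPres (n + 1) m f} →
      {f : ZMod n → ZMod m // CongPres n m f} :=
    fun f => ⟨res f.1, res_cp f.1 f.2⟩ with hRes
  have hinj : Function.Injective Res := by
    rintro ⟨f, hf⟩ ⟨g, hg⟩ hfg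
    rw [congPres_iff] at hf hg
    simp only [hRes, Subtype.mk.injEq] at hfg ⊢
    have heq : ∀ a : ℕ, a < n → f ((a : ℕ) : ZMod (n + 1)) = g ((a : ℕ) : ZMod (n + 1)) := by
      intro a ha
      rw [← res_apply f a ha, ← res_apply g a ha, hfg]
    have hn' : f ((n : ℕ) : ZMod (n + 1)) = g ((n : ℕ) : ZMod (n + 1)) := by
      apply zmod_eq_of_modEq
      apply modEq_of_primePow hm0
      intro p k hp hk hpk
      have hple : p ^ k ≤ n := le_trans (prime_pow_le_mu hm0 hp hk hpk) hn
      have hppos : 0 < p ^ k := pow_pos hp.pos k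
      have hb : n - p ^ k < n := by omega
      have hmod : n - p ^ k ≡ n [MOD p ^ k] :=
        (Nat.modEq_iff_dvd' (by omega)).mpr ⟨1, by omega⟩
      calc (f ((n : ℕ) : ZMod (n + 1))).val
          ≡ (f (((n - p ^ k : ℕ)) : ZMod (n + 1))).val [MOD p ^ k] :=
            hf (p ^ k) hpk n (n - p ^ k) (by omega) (by omega) hmod.symm
        _ = (g (((n - p ^ k : ℕ)) : ZMod (n + 1))).val := by rw [heq _ hb]
        _ ≡ (g ((n : ℕ) : ZMod (n + 1))).val [MOD p ^ k] :=
            hg (p ^ k) hpk (n - p ^ k) n (by omega) (by omega) hmod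
    funext x
    have hx : x = ((x.val : ℕ) : ZMod (n + 1)) := (ZMod.natCast_rightInverse x).symm
    have hxlt : x.val < n + 1 := ZMod.val_lt x
    rcases Nat.lt_or_ge x.val n with h | h
    · rw [hx]; exact heq x.val h
    · have : x.val = n := by omega
      rw [hx, this]; exact hn'
  have hsurj : Function.Surjective Res := by
    rintro ⟨g, hg⟩
    rw [congPres_iff] at hg
    -- choose the value at `n` by CRT
    set s : ℕ → ℕ := fun p => p ^ m.factorization p with hs
    have hs0 : ∀ p ∈ m.primeFactors, s p ≠ 0 := fun p hp =>
      pow_ne_zero _ (Nat.Prime.pos (Nat.prime_of_mem_primeFactors hp)).ne'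
    have hpp : Set.Pairwise (m.primeFactors : Set ℕ) (Function.onFun Nat.Coprime s) := by
      intro p hp q hq hpq
      exact Nat.Coprime.pow _ _ ((Nat.coprime_primes
        (Nat.prime_of_mem_primeFactors hp) (Nat.prime_of_mem_primeFactors hq)).mpr hpq)
    set a : ℕ → ℕ := fun p => (g (((n - s p : ℕ)) : ZMod n)).val with ha
    obtain ⟨v, hv⟩ := Nat.chineseRemainderOfFinset a s m.primeFactors hs0 hpp
    set f : ZMod (n + 1) → ZMod m :=
      fun x => if x.val < n then g ((x.val : ℕ) : ZMod n) else ((v : ℕ) : ZMod m) with hfdef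
    have fval : ∀ x : ℕ, x < n → f ((x : ℕ) : ZMod (n + 1)) = g ((x : ℕ) : ZMod n) := by
      intro x hxn
      simp only [hfdef, ZMod.val_natCast_of_lt (show x < n + 1 by omega), if_pos hxn]
    have fvaln : f ((n : ℕ) : ZMod (n + 1)) = ((v : ℕ) : ZMod m) := by
      simp only [hfdef, ZMod.val_natCast_of_lt (show n < n + 1 by omega), lt_self_iff_false,
        if_false]
    have hf : CongPres (n + 1) m f := by
      rw [congPres_iff]
      intro d hd a' b' ha' hb' hab
      have hd0 : d ≠ 0 := fun h => hm0 (by simpa [h] using hd)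
      apply modEq_of_primePow hd0
      intro p k hp hk hpkd
      have hpkm : p ^ k ∣ m := dvd_trans hpkd hd
      have hppf : p ∈ m.primeFactors :=
        Nat.mem_primeFactors.mpr ⟨hp, dvd_trans (dvd_pow_self p hk) hpkm, hm0⟩
      have hke : k ≤ m.factorization p :=
        (Nat.Prime.pow_dvd_iff_le_factorization hp hm0).mp hpkm
      have hkse : p ^ k ∣ s p := pow_dvd_pow p hke
      have hsm : s p ∣ m := Nat.ordProj_dvd m p
      have hsfz : s p ≠ 0 := hs0 p hppf
      have hsn : s p ≤ n := le_trans
        (Finset.le_sup (f := fun p => p ^ m.factorization p) hppf) hn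
      -- for each point `c ≤ n`, relate `f c` to a `g`-value at some point `< n`
      have key : ∀ c : ℕ, c < n + 1 → ∃ c' : ℕ, c' < n ∧ c' ≡ c [MOD p ^ k] ∧
          (f ((c : ℕ) : ZMod (n + 1))).val ≡ (g ((c' : ℕ) : ZMod n)).val [MOD p ^ k] := by
        intro c hc
        rcases Nat.lt_or_ge c n with h | h
        · exact ⟨c, h, Nat.ModEq.refl _, by rw [fval c h]⟩
        · have hcn : c = n := by omega
          refine ⟨n - s p, by omega, ?_, ?_⟩
          · rw [hcn]
            exact (Nat.modEq_iff_dvd' (by omega)).mpr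
              (dvd_trans hkse ⟨1, by omega⟩)
          · rw [hcn, fvaln]
            have h1 : ((v : ℕ) : ZMod m).val ≡ (v : ℕ) [MOD p ^ k] := by
              rw [ZMod.val_natCast]
              exact Nat.ModEq.of_dvd (dvd_trans hkse hsm) (Nat.mod_modEq v m)
            have h2 : (v : ℕ) ≡ a p [MOD p ^ k] :=
              Nat.ModEq.of_dvd hkse (hv p hppf)
            exact (h1.trans h2)
      obtain ⟨a'', ha''lt, ha''eq, ha''⟩ := key a' ha'
      obtain ⟨b'', hb''lt, hb''eq, hb''⟩ := key b' hb'
      have hab'' : a'' ≡ b'' [MOD p ^ k] :=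
        (ha''eq.trans (Nat.ModEq.of_dvd hpkd hab)).trans hb''eq.symm
      calc (f ((a' : ℕ) : ZMod (n + 1))).val
          ≡ (g ((a'' : ℕ) : ZMod n)).val [MOD p ^ k] := ha''
        _ ≡ (g ((b'' : ℕ) : ZMod n)).val [MOD p ^ k] :=
            hg (p ^ k) hpkm a'' b'' ha''lt hb''lt hab''
        _ ≡ (f ((b' : ℕ) : ZMod (n + 1))).val [MOD p ^ k] := hb''.symm
    refine ⟨⟨f, hf⟩, ?_⟩
    simp only [hRes, Subtype.mk.injEq]
    funext x
    have hxlt : x.val < n := ZMod.val_lt x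
    calc res f x = f ((x.val : ℕ) : ZMod (n + 1)) := rfl
      _ = g ((x.val : ℕ) : ZMod n) := fval x.val hxlt
      _ = g x := by rw [ZMod.natCast_rightInverse x]
  exact Nat.card_congr (Equiv.ofBijective Res ⟨hinj, hsurj⟩)

theorem stmt_18 (m : ℕ) (hm : 2 ≤ m) (n n' : ℕ) (hn : mu m ≤ n) (hn' : mu m ≤ n') :
    CP n m = CP n' m := by
  have key : ∀ N, mu m ≤ N → CP N m = CP (mu m) m := by
    intro N hN
    induction N, hN using Nat.le_induction with
    | base => rfl
    | succ N hN ih => rw [CP_succ m N hm hN, ih]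
  rw [key n hn, key n' hn']
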